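/- Let (K_i) be a sequence of finite groups with K_i' ≤ Z(K_i), all having commutator subgroup identified with a fixed finite abelian group K'. Then the set F = {H ≤ K' : the sequence ([K_i : Z̄(K_i/H)])_i is bounded} is a filter in the lattice of subgroups of K': it contains K', is closed under intersections, and is upward closed. Consequently there is a smallest subgroup H₀ ≤ K' such that ([K_i : Z̄(K_i/H₀)])_i is bounded. -/

import Mathlib

open scoped commutatorElement

lemma mem_comm' {K : Type*} [Group K] (k l : K) : ⁅k, l⁆ ∈ commutator K :=
  Subgroup.commutator_mem_commutator (Subgroup.mem_top k) (Subgroup.mem_top l)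

section aux

variable {A : Type*} [CommGroup A] {G : Type*} [Group G]

lemma comm_mul_left (hc : commutator G ≤ Subgroup.center G) (a b l : G) : ⁅a * b, l⁆ = ⁅b, l⁆ * ⁅a, l⁆ := by
  have h1 : ∀ g : G, g * ⁅b, l⁆ = ⁅b, l⁆ * g :=
    Subgroup.mem_center_iff.mp (hc (mem_comm' b l))
  calc ⁅a * b, l⁆ = a * ⁅b, l⁆ * a⁻¹ * ⁅a, l⁆ := by group
    _ = ⁅b, l⁆ * a * a⁻¹ * ⁅a, l⁆ := by rw [h1 a]
    _ = ⁅b, l⁆ * ⁅a, l⁆ := by group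

lemma comm_inv_left (hc : commutator G ≤ Subgroup.center G) (a l : G) : ⁅a⁻¹, l⁆ = ⁅a, l⁆⁻¹ := by
  have h1 : ∀ g : G, g * ⁅a, l⁆⁻¹ = ⁅a, l⁆⁻¹ * g :=
    Subgroup.mem_center_iff.mp ((Subgroup.center G).inv_mem (hc (mem_comm' a l)))
  calc ⁅a⁻¹, l⁆ = a⁻¹ * ⁅a, l⁆⁻¹ * a := by group
    _ = a⁻¹ * (⁅a, l⁆⁻¹ * a) := by rw [mul_assoc]
    _ = a⁻¹ * (a * ⁅a, l⁆⁻¹) := by rw [← h1 a]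
    _ = ⁅a, l⁆⁻¹ := by group

def Zsub (hc : commutator G ≤ Subgroup.center G) (e : (↥(commutator G)) ≃* A)
    (H : Subgroup A) : Subgroup G where
  carrier := {k | ∀ l : G, e ⟨⁅k, l⁆, mem_comm' k l⟩ ∈ H}
  one_mem' := by
    intro l
    have : (⟨⁅(1 : G), l⁆, mem_comm' 1 l⟩ : ↥(commutator G)) = 1 := by
      ext; simp
    rw [this, map_one]; exact H.one_mem
  mul_mem' := by
    intro a b ha hb l
    have : (⟨⁅a * b, l⁆, mem_comm' _ l⟩ : ↥(commutator G)) =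
        ⟨⁅b, l⁆, mem_comm' b l⟩ * ⟨⁅a, l⁆, mem_comm' a l⟩ := by
      ext; exact comm_mul_left hc a b l
    rw [this, map_mul]; exact H.mul_mem (hb l) (ha l)
  inv_mem' := by
    intro a ha l
    have : (⟨⁅a⁻¹, l⁆, mem_comm' _ l⟩ : ↥(commutator G)) =
        (⟨⁅a, l⁆, mem_comm' a l⟩ : ↥(commutator G))⁻¹ := by
      ext; exact comm_inv_left hc a l
    rw [this, map_inv]; exact H.inv_mem (ha l)

lemma mem_Zsub (hc : commutator G ≤ Subgroup.center G) (e : (↥(commutator G)) ≃* A)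
    (H : Subgroup A) {k : G} : k ∈ Zsub hc e H ↔ ∀ l : G, e ⟨⁅k, l⁆, mem_comm' k l⟩ ∈ H :=
  Iff.rfl

lemma card_Zsub (hc : commutator G ≤ Subgroup.center G) (e : (↥(commutator G)) ≃* A)
    (H : Subgroup A) :
    Nat.card {k : G // ∀ l : G, e ⟨⁅k, l⁆, mem_comm' k l⟩ ∈ H} = Nat.card (Zsub hc e H) :=
  Nat.card_congr (Equiv.subtypeEquivRight fun _ => Iff.rfl)

end aux

theorem bounded_index_filter {A : Type*} [CommGroup A] [Finite A]
    (K : ℕ → Type*) [∀ i, Group (K i)] [∀ i, Finite (K i)]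
    (hc : ∀ i, commutator (K i) ≤ Subgroup.center (K i))
    (e : ∀ i, (↥(commutator (K i))) ≃* A)
    (Bdd : Subgroup A → Prop)
    (hBdd : ∀ H : Subgroup A, Bdd H ↔ ∃ n : ℕ, ∀ i,
      Nat.card (K i) ≤ n * Nat.card {k : K i // ∀ l : K i, e i ⟨⁅k, l⁆, mem_comm' k l⟩ ∈ H}) :
    Bdd ⊤ ∧
    (∀ H₁ H₂ : Subgroup A, Bdd H₁ → Bdd H₂ → Bdd (H₁ ⊓ H₂)) ∧
    (∀ H₁ H₂ : Subgroup A, H₁ ≤ H₂ → Bdd H₁ → Bdd H₂) ∧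
    ∃ H₀ : Subgroup A, Bdd H₀ ∧ ∀ H : Subgroup A, Bdd H ↔ H₀ ≤ H := by
  -- index bound from card bound
  have key : ∀ (H : Subgroup A) (i : ℕ) (n : ℕ),
      Nat.card (K i) ≤ n * Nat.card {k : K i // ∀ l : K i, e i ⟨⁅k, l⁆, mem_comm' k l⟩ ∈ H} →
      (Zsub (hc i) (e i) H).index ≤ n := by
    intro H i n h
    rw [card_Zsub (hc i)] at h
    have hpos : 0 < Nat.card (Zsub (hc i) (e i) H) := Nat.card_pos
    rw [← (Zsub (hc i) (e i) H).index_mul_card] at h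
    exact Nat.le_of_mul_le_mul_right h hpos
  have keyrev : ∀ (H : Subgroup A) (i : ℕ) (n : ℕ),
      (Zsub (hc i) (e i) H).index ≤ n →
      Nat.card (K i) ≤ n * Nat.card {k : K i // ∀ l : K i, e i ⟨⁅k, l⁆, mem_comm' k l⟩ ∈ H} := by
    intro H i n h
    rw [card_Zsub, ← (Zsub (hc i) (e i) H).index_mul_card]
    exact Nat.mul_le_mul_right _ h
  have hTop : Bdd ⊤ := by
    rw [hBdd]
    refine ⟨1, fun i => ?_⟩
    rw [one_mul]
    exact le_of_eq (Nat.card_congr (Equiv.subtypeUnivEquiv fun k l =>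
      Subgroup.mem_top _).symm)
  have hInf : ∀ H₁ H₂ : Subgroup A, Bdd H₁ → Bdd H₂ → Bdd (H₁ ⊓ H₂) := by
    intro H₁ H₂ h₁ h₂
    rw [hBdd] at h₁ h₂ ⊢
    obtain ⟨n₁, hn₁⟩ := h₁
    obtain ⟨n₂, hn₂⟩ := h₂
    refine ⟨n₁ * n₂, fun i => ?_⟩
    apply keyrev
    have hZ : Zsub (hc i) (e i) (H₁ ⊓ H₂) = Zsub (hc i) (e i) H₁ ⊓ Zsub (hc i) (e i) H₂ := by
      ext k
      simp only [mem_Zsub, Subgroup.mem_inf, forall_and]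
    rw [hZ]
    calc (Zsub (hc i) (e i) H₁ ⊓ Zsub (hc i) (e i) H₂).index
        ≤ (Zsub (hc i) (e i) H₁).index * (Zsub (hc i) (e i) H₂).index :=
          Subgroup.index_inf_le
      _ ≤ n₁ * n₂ := Nat.mul_le_mul (key _ i _ (hn₁ i)) (key _ i _ (hn₂ i))
  have hMono : ∀ H₁ H₂ : Subgroup A, H₁ ≤ H₂ → Bdd H₁ → Bdd H₂ := by
    intro H₁ H₂ hle h₁
    rw [hBdd] at h₁ ⊢
    obtain ⟨n, hn⟩ := h₁
    refine ⟨n, fun i => ?_⟩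
    refine le_trans (hn i) (Nat.mul_le_mul_left n ?_)
    apply Nat.card_le_card_of_injective (fun x => ⟨x.1, fun l => hle (x.2 l)⟩)
    intro x y hxy
    simpa [Subtype.ext_iff] using hxy
  refine ⟨hTop, hInf, hMono, ?_⟩
  -- smallest element: minimal element of the Bdd set
  obtain ⟨H₀, hH₀, hmin⟩ := (Set.toFinite {H : Subgroup A | Bdd H}).exists_minimal
    ⟨⊤, hTop⟩
  refine ⟨H₀, hH₀, fun H => ⟨fun hH => ?_, fun hle => hMono H₀ H hle hH₀⟩⟩
  have h1 : Bdd (H₀ ⊓ H) := hInf H₀ H hH₀ hH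
  have h2 := le_antisymm (hmin h1 inf_le_left) inf_le_left
  calc H₀ = H₀ ⊓ H := h2
    _ ≤ H := inf_le_right
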